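/- arXiv:1606.04136 — 2 statements merged into one kernel-verified Lean document; each statement's English description precedes it below -/
import Mathlib

section
/- For independent positive integer-valued random variables σ₁,...,σ_J with finite means, letting σ_max = max_j σ_j and σ_min = min_j σ_j, we have E[σ_max/σ_min] ≥ E[σ_max]/min_j E[σ_j]. -/
open MeasureTheory ProbabilityTheory Finset

lemma key_real (a b t : ℝ) (ha : 0 < a) (hab : a ≤ b) (ht : 0 ≤ t) :
    max b t * a ≤ max a t * b := by
  rcases le_total t a with h | h
  · rw [max_eq_left (h.trans hab), max_eq_left h]; ring_nf; exact le_rfl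
  · rw [max_eq_right h]
    rcases le_total t b with h2 | h2
    · rw [max_eq_left h2]; nlinarith
    · rw [max_eq_right h2]; nlinarith

lemma g_anti (t : ℕ) : ∀ x y : ℕ, x ≤ y →
    ((max (max y t) 1 : ℕ) : ℝ) / ((max y 1 : ℕ) : ℝ) ≤ ((max (max x t) 1 : ℕ) : ℝ) / ((max x 1 : ℕ) : ℝ) := by
  intro x y hxy
  have hx : (1:ℝ) ≤ ((max x 1 : ℕ) : ℝ) := by exact_mod_cast Nat.le_max_right x 1
  have hy : (1:ℝ) ≤ ((max y 1 : ℕ) : ℝ) := by exact_mod_cast Nat.le_max_right y 1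
  rw [div_le_div_iff₀ (by linarith) (by linarith)]
  push_cast
  rw [sup_right_comm (y:ℝ) (t:ℝ) 1, sup_right_comm (x:ℝ) (t:ℝ) 1]
  exact key_real _ _ _ (by positivity) (by push_cast at hx hy ⊢; exact max_le_max (by exact_mod_cast hxy) le_rfl) (by positivity)

lemma cheb (ρ : Measure ℕ) [IsProbabilityMeasure ρ] (h1 : ∀ᵐ s ∂ρ, 1 ≤ s)
    (hid : Integrable (fun s : ℕ => (s:ℝ)) ρ) (t : ℕ) :
    ∫ s, ((max s t : ℕ) : ℝ) ∂ρ ≤ (∫ s, ((max s t : ℕ):ℝ) / (s:ℝ) ∂ρ) * ∫ s : ℕ, (s:ℝ) ∂ρ := by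
  set g : ℕ → ℝ := fun s => ((max (max s t) 1 : ℕ):ℝ) / ((max s 1 : ℕ):ℝ) with hgdef
  set h : ℕ → ℝ := fun s : ℕ => (s:ℝ) with hhdef
  have hmg : Measurable g := measurable_from_top
  have hgb : ∀ s, ‖g s‖ ≤ 1 + t := by
    intro s
    have hd : (1:ℝ) ≤ ((max s 1 : ℕ):ℝ) := by exact_mod_cast Nat.le_max_right s 1
    rw [Real.norm_eq_abs, abs_of_nonneg (by positivity), div_le_iff₀ (by linarith)]
    have hnum : ((max (max s t) 1 : ℕ):ℝ) ≤ ((max s 1 : ℕ):ℝ) + t := by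
      exact_mod_cast (by omega : max (max s t) 1 ≤ max s 1 + t)
    nlinarith [Nat.cast_nonneg (α := ℝ) t]
  have hg_int : Integrable g ρ :=
    (integrable_const (1 + (t:ℝ))).mono' hmg.aestronglyMeasurable (Filter.Eventually.of_forall hgb)
  have hgh_int : Integrable (fun s => g s * h s) ρ := by
    refine (hid.const_mul (1 + (t:ℝ))).mono' (hmg.mul measurable_from_top).aestronglyMeasurable
      (Filter.Eventually.of_forall fun s => ?_)
    rw [norm_mul]
    have : ‖h s‖ = (s:ℝ) := by simp [hhdef]
    rw [this]
    exact mul_le_mul_of_nonneg_right (hgb s) (by positivity)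
  have key : ∫ z : ℕ × ℕ, (g z.1 - g z.2) * (h z.1 - h z.2) ∂(ρ.prod ρ) ≤ 0 := by
    refine integral_nonpos fun z => ?_
    rcases le_total z.1 z.2 with hz | hz
    · exact mul_nonpos_of_nonneg_of_nonpos (sub_nonneg.2 (g_anti t z.1 z.2 hz))
        (sub_nonpos.2 (by simp only [hhdef]; exact_mod_cast hz))
    · exact mul_nonpos_of_nonpos_of_nonneg (sub_nonpos.2 (g_anti t z.2 z.1 hz))
        (sub_nonneg.2 (by simp only [hhdef]; exact_mod_cast hz))
  have i1 : Integrable (fun z : ℕ × ℕ => (fun s => g s * h s) z.1 * (fun _ : ℕ => (1:ℝ)) z.2) (ρ.prod ρ) :=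
    hgh_int.mul_prod (integrable_const 1)
  have i2 : Integrable (fun z : ℕ × ℕ => g z.1 * h z.2) (ρ.prod ρ) := hg_int.mul_prod hid
  have i3 : Integrable (fun z : ℕ × ℕ => h z.1 * g z.2) (ρ.prod ρ) := hid.mul_prod hg_int
  have i4 : Integrable (fun z : ℕ × ℕ => (fun _ : ℕ => (1:ℝ)) z.1 * (fun s => g s * h s) z.2) (ρ.prod ρ) :=
    (integrable_const 1).mul_prod hgh_int
  have expand : ∫ z : ℕ × ℕ, (g z.1 - g z.2) * (h z.1 - h z.2) ∂(ρ.prod ρ)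
      = 2 * (∫ s, g s * h s ∂ρ) - 2 * ((∫ s, g s ∂ρ) * ∫ s, h s ∂ρ) := by
    have e : (fun z : ℕ × ℕ => (g z.1 - g z.2) * (h z.1 - h z.2))
        = fun z => ((fun s => g s * h s) z.1 * (fun _ : ℕ => (1:ℝ)) z.2 - g z.1 * h z.2)
          - (h z.1 * g z.2 - (fun _ : ℕ => (1:ℝ)) z.1 * (fun s => g s * h s) z.2) := by
      funext z; ring
    have i12 : Integrable (fun z : ℕ × ℕ => (fun s => g s * h s) z.1 * (fun _ : ℕ => (1:ℝ)) z.2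
        - g z.1 * h z.2) (ρ.prod ρ) := i1.sub i2
    have i34 : Integrable (fun z : ℕ × ℕ => h z.1 * g z.2
        - (fun _ : ℕ => (1:ℝ)) z.1 * (fun s => g s * h s) z.2) (ρ.prod ρ) := i3.sub i4
    rw [e, integral_sub i12 i34, integral_sub i1 i2, integral_sub i3 i4,
      integral_prod_mul g h, integral_prod_mul h g,
      integral_prod_mul (fun s => g s * h s) (fun _ : ℕ => (1:ℝ)),
      integral_prod_mul (fun _ : ℕ => (1:ℝ)) (fun s => g s * h s)]
    simp only [integral_const, measure_univ, ENNReal.toReal_one, probReal_univ, smul_eq_mul]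
    ring
  have main : ∫ s, g s * h s ∂ρ ≤ (∫ s, g s ∂ρ) * ∫ s, h s ∂ρ := by linarith [key, expand.symm.trans_le key]
  have e1 : ∫ s, ((max s t : ℕ):ℝ) ∂ρ = ∫ s, g s * h s ∂ρ := by
    refine integral_congr_ae (h1.mono fun s hs => ?_)
    have h2 : max s 1 = s := by omega
    have h3 : max (max s t) 1 = max s t := by omega
    have hs0 : (s:ℝ) ≠ 0 := by exact_mod_cast Nat.one_le_iff_ne_zero.mp hs
    simp only [hgdef, hhdef, h2, h3]
    rw [div_mul_cancel₀ _ hs0]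
  have e2 : ∫ s, ((max s t : ℕ):ℝ) / (s:ℝ) ∂ρ = ∫ s, g s ∂ρ := by
    refine integral_congr_ae (h1.mono fun s hs => ?_)
    have h2 : max s 1 = s := by omega
    have h3 : max (max s t) 1 = max s t := by omega
    simp only [hgdef, h2, h3]
  rw [e1, e2]
  exact main

lemma core {Ω : Type*} [MeasurableSpace Ω] (μ : Measure Ω) [IsProbabilityMeasure μ]
    (S T : Ω → ℕ) (hS : Measurable S) (hT : Measurable T)
    (hind : IndepFun T S μ) (hS1 : ∀ ω, 1 ≤ S ω)
    (hSint : Integrable (fun ω => (S ω : ℝ)) μ)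
    (hTint : Integrable (fun ω => (T ω : ℝ)) μ)
    (hratio : Integrable (fun ω => ((max (S ω) (T ω) : ℕ) : ℝ) / (S ω : ℝ)) μ) :
    ∫ ω, ((max (S ω) (T ω) : ℕ) : ℝ) ∂μ ≤
      (∫ ω, ((max (S ω) (T ω) : ℕ) : ℝ) / (S ω : ℝ) ∂μ) * ∫ ω, (S ω : ℝ) ∂μ := by
  set ν := μ.map T with hν
  set ρ := μ.map S with hρ
  have hpν : IsProbabilityMeasure ν := Measure.isProbabilityMeasure_map hT.aemeasurable
  have hpρ : IsProbabilityMeasure ρ := Measure.isProbabilityMeasure_map hS.aemeasurable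
  have hpair : Measurable (fun ω => (T ω, S ω)) := hT.prodMk hS
  have hmap : μ.map (fun ω => (T ω, S ω)) = ν.prod ρ :=
    (indepFun_iff_map_prod_eq_prod_map_map hT.aemeasurable hS.aemeasurable).mp hind
  set F1 : ℕ × ℕ → ℝ := fun z => ((max z.2 z.1 : ℕ) : ℝ) with hF1
  set F2 : ℕ × ℕ → ℝ := fun z => ((max z.2 z.1 : ℕ) : ℝ) / (z.2 : ℝ) with hF2
  set F3 : ℕ × ℕ → ℝ := fun z => (z.2 : ℝ) with hF3
  have hmF1 : Measurable F1 := measurable_of_countable _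
  have hmF2 : Measurable F2 := measurable_of_countable _
  have hmF3 : Measurable F3 := measurable_of_countable _
  have hmaxint : Integrable (fun ω => ((max (S ω) (T ω) : ℕ) : ℝ)) μ := by
    refine (hSint.add hTint).mono' ((hmF1.comp hpair).aestronglyMeasurable) ?_
    refine Filter.Eventually.of_forall fun ω => ?_
    rw [Real.norm_eq_abs, abs_of_nonneg (by positivity), Pi.add_apply]
    exact_mod_cast (by omega : max (S ω) (T ω) ≤ S ω + T ω)
  -- transfer integrals to the product measure
  have htr : ∀ (F : ℕ × ℕ → ℝ), Measurable F →
      ∫ z, F z ∂(ν.prod ρ) = ∫ ω, F (T ω, S ω) ∂μ := by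
    intro F hF
    rw [← hmap, integral_map hpair.aemeasurable hF.aestronglyMeasurable]
  have hint1 : Integrable F1 (ν.prod ρ) := by
    rw [← hmap, integrable_map_measure hmF1.aestronglyMeasurable hpair.aemeasurable]
    exact hmaxint
  have hint2 : Integrable F2 (ν.prod ρ) := by
    rw [← hmap, integrable_map_measure hmF2.aestronglyMeasurable hpair.aemeasurable]
    exact hratio
  have hint3 : Integrable F3 (ν.prod ρ) := by
    rw [← hmap, integrable_map_measure hmF3.aestronglyMeasurable hpair.aemeasurable]
    exact hSint
  have hρ1 : ∀ᵐ s ∂ρ, 1 ≤ s := by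
    rw [hρ, ae_map_iff hS.aemeasurable (by trivial : MeasurableSet {s : ℕ | 1 ≤ s})]
    exact Filter.Eventually.of_forall hS1
  have hρid : Integrable (fun s : ℕ => (s : ℝ)) ρ := by
    rw [hρ, integrable_map_measure (measurable_of_countable _).aestronglyMeasurable hS.aemeasurable]
    exact hSint
  have hc : ∫ s : ℕ, (s : ℝ) ∂ρ = ∫ ω, (S ω : ℝ) ∂μ := by
    rw [hρ, integral_map hS.aemeasurable (measurable_of_countable _).aestronglyMeasurable]
  -- Fubini and pointwise Chebyshev
  have hfub1 : ∫ z, F1 z ∂(ν.prod ρ) = ∫ t, (∫ s, ((max s t : ℕ) : ℝ) ∂ρ) ∂ν := by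
    rw [integral_prod _ hint1]
  have hfub2 : ∫ z, F2 z ∂(ν.prod ρ) = ∫ t, (∫ s, ((max s t : ℕ) : ℝ) / (s : ℝ) ∂ρ) ∂ν := by
    rw [integral_prod _ hint2]
  have hmono : ∫ t, (∫ s, ((max s t : ℕ) : ℝ) ∂ρ) ∂ν
      ≤ ∫ t, (∫ s, ((max s t : ℕ) : ℝ) / (s : ℝ) ∂ρ) * (∫ s : ℕ, (s : ℝ) ∂ρ) ∂ν := by
    refine integral_mono hint1.integral_prod_left
      (hint2.integral_prod_left.mul_const _) fun t => ?_
    exact cheb ρ hρ1 hρid t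
  calc ∫ ω, ((max (S ω) (T ω) : ℕ) : ℝ) ∂μ = ∫ z, F1 z ∂(ν.prod ρ) := (htr F1 hmF1).symm
    _ = ∫ t, (∫ s, ((max s t : ℕ) : ℝ) ∂ρ) ∂ν := hfub1
    _ ≤ ∫ t, (∫ s, ((max s t : ℕ) : ℝ) / (s : ℝ) ∂ρ) * (∫ s : ℕ, (s : ℝ) ∂ρ) ∂ν := hmono
    _ = (∫ t, (∫ s, ((max s t : ℕ) : ℝ) / (s : ℝ) ∂ρ) ∂ν) * (∫ s : ℕ, (s : ℝ) ∂ρ) :=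
        integral_mul_const _ _
    _ = (∫ ω, ((max (S ω) (T ω) : ℕ) : ℝ) / (S ω : ℝ) ∂μ) * ∫ ω, (S ω : ℝ) ∂μ := by
        rw [← hfub2, htr F2 hmF2, hc]

/-- For independent positive integer-valued random variables σ₁,...,σ_J with finite means,
E[σ_max/σ_min] ≥ E[σ_max]/min_j E[σ_j]. -/
theorem stmt_0 {Ω : Type*} [MeasurableSpace Ω] (μ : Measure Ω) [IsProbabilityMeasure μ]
    (J : ℕ) [NeZero J] (σ : Fin J → Ω → ℕ)
    (hpos : ∀ j ω, 1 ≤ σ j ω)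
    (hmeas : ∀ j, Measurable (σ j))
    (hindep : iIndepFun σ μ)
    (hint : ∀ j, Integrable (fun ω => (σ j ω : ℝ)) μ)
    (hratio : Integrable (fun ω =>
      ((Finset.univ.sup' Finset.univ_nonempty fun j => σ j ω : ℕ) : ℝ) /
      ((Finset.univ.inf' Finset.univ_nonempty fun j => σ j ω : ℕ) : ℝ)) μ) :
    (∫ ω, ((Finset.univ.sup' Finset.univ_nonempty fun j => σ j ω : ℕ) : ℝ) ∂μ) /
      (Finset.univ.inf' Finset.univ_nonempty fun j => ∫ ω, (σ j ω : ℝ) ∂μ) ≤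
    ∫ ω, ((Finset.univ.sup' Finset.univ_nonempty fun j => σ j ω : ℕ) : ℝ) /
      ((Finset.univ.inf' Finset.univ_nonempty fun j => σ j ω : ℕ) : ℝ) ∂μ := by
  obtain ⟨j₀, -, hj₀⟩ := Finset.exists_mem_eq_inf' (Finset.univ_nonempty (α := Fin J))
    (fun j => ∫ ω, (σ j ω : ℝ) ∂μ)
  set S : Ω → ℕ := σ j₀ with hSdef
  set T : Ω → ℕ := fun ω => (Finset.univ.erase j₀).sup fun j => σ j ω with hTdef
  set M : Ω → ℕ := fun ω => Finset.univ.sup' Finset.univ_nonempty fun j => σ j ω with hMdef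
  set m : Ω → ℕ := fun ω => Finset.univ.inf' Finset.univ_nonempty fun j => σ j ω with hmdef
  have hS : Measurable S := hmeas j₀
  have hpi : Measurable (fun ω => (fun j => σ j ω : Fin J → ℕ)) :=
    measurable_pi_lambda _ fun j => hmeas j
  have hT : Measurable T := (measurable_of_countable
    (fun v : Fin J → ℕ => (Finset.univ.erase j₀).sup fun j => v j)).comp hpi
  have hMmeas : Measurable M := (measurable_of_countable
    (fun v : Fin J → ℕ => Finset.univ.sup' Finset.univ_nonempty fun j => v j)).comp hpi
  have hmmeas : Measurable m := (measurable_of_countable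
    (fun v : Fin J → ℕ => Finset.univ.inf' Finset.univ_nonempty fun j => v j)).comp hpi
  -- M = max S T
  have hM : ∀ ω, M ω = max (S ω) (T ω) := by
    intro ω
    rw [hMdef]
    simp only
    rw [Finset.sup'_eq_sup]
    conv_lhs => rw [← Finset.insert_erase (Finset.mem_univ j₀)]
    rw [Finset.sup_insert]
  -- independence of T and S
  have hind : IndepFun T S μ := by
    have hdisj : Disjoint (Finset.univ.erase j₀) ({j₀} : Finset (Fin J)) :=
      Finset.disjoint_singleton_right.mpr (Finset.notMem_erase _ _)
    have hbase := hindep.indepFun_finset (Finset.univ.erase j₀) ({j₀} : Finset (Fin J))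
      hdisj hmeas
    have hφ : Measurable (fun v : (i : {x // x ∈ Finset.univ.erase j₀}) → ℕ =>
        Finset.univ.sup fun i => v i) := measurable_of_countable _
    have hψ : Measurable (fun v : (i : {x // x ∈ ({j₀} : Finset (Fin J))}) → ℕ =>
        v ⟨j₀, Finset.mem_singleton_self j₀⟩) := measurable_of_countable _
    have := hbase.comp hφ hψ
    have hTeq : T = (fun v : (i : {x // x ∈ Finset.univ.erase j₀}) → ℕ =>
        Finset.univ.sup fun i => v i) ∘ (fun a (i : {x // x ∈ Finset.univ.erase j₀}) => σ i a) := by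
      funext a
      simp only [hTdef, Function.comp_apply, Finset.univ_eq_attach]
      exact (Finset.sup_attach _ _).symm
    rw [hTeq]
    exact this
  -- integrability
  have hTbound : ∀ ω, (T ω : ℝ) ≤ ∑ j, (σ j ω : ℝ) := by
    intro ω
    have : T ω ≤ ∑ j, σ j ω := by
      refine Finset.sup_le fun j hj => Finset.single_le_sum (f := fun j => σ j ω)
        (fun i _ => Nat.zero_le _) (Finset.mem_univ j)
    exact_mod_cast this
  have hTint : Integrable (fun ω => (T ω : ℝ)) μ := by
    refine (integrable_finset_sum Finset.univ fun j _ => hint j).mono'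
      ((measurable_from_top.comp hT).aestronglyMeasurable) ?_
    refine Filter.Eventually.of_forall fun ω => ?_
    rw [Real.norm_eq_abs, abs_of_nonneg (by positivity)]
    exact hTbound ω
  have hMbound : ∀ ω, (M ω : ℝ) ≤ ∑ j, (σ j ω : ℝ) := by
    intro ω
    have : M ω ≤ ∑ j, σ j ω := by
      refine Finset.sup'_le _ _ fun j hj => Finset.single_le_sum (f := fun j => σ j ω)
        (fun i _ => Nat.zero_le _) (Finset.mem_univ j)
    exact_mod_cast this
  have hm1 : ∀ ω, 1 ≤ m ω := fun ω => Finset.le_inf' _ _ fun j _ => hpos j ω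
  have hmS : ∀ ω, m ω ≤ S ω := fun ω => Finset.inf'_le _ (Finset.mem_univ j₀)
  have hratioTS : Integrable (fun ω => ((max (S ω) (T ω) : ℕ) : ℝ) / (S ω : ℝ)) μ := by
    refine hratio.mono' (((measurable_from_top.comp (hS.max hT)).div
      (measurable_from_top.comp hS)).aestronglyMeasurable) ?_
    refine Filter.Eventually.of_forall fun ω => ?_
    rw [Real.norm_eq_abs, abs_of_nonneg (by positivity), ← hM ω]
    have h1 : (0:ℝ) < m ω := by exact_mod_cast hm1 ω
    have h2 : (m ω : ℝ) ≤ (S ω : ℝ) := by exact_mod_cast hmS ω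
    gcongr
  have hcore := core μ S T hS hT hind (fun ω => hpos j₀ ω) (hint j₀) hTint hratioTS
  -- rewrite integrands
  have hMeq : (fun ω => ((Finset.univ.sup' Finset.univ_nonempty fun j => σ j ω : ℕ) : ℝ))
      = fun ω => ((max (S ω) (T ω) : ℕ) : ℝ) := by
    funext ω; rw [← hM ω]
  have hS1int : (1:ℝ) ≤ ∫ ω, (S ω : ℝ) ∂μ := by
    have h := integral_mono (μ := μ) (integrable_const (1:ℝ)) (hint j₀)
      (fun ω => by show (1:ℝ) ≤ (σ j₀ ω : ℝ); exact_mod_cast hpos j₀ ω)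
    simpa using h
  have hSpos : (0:ℝ) < ∫ ω, (S ω : ℝ) ∂μ := lt_of_lt_of_le one_pos hS1int
  have hstep2 : ∫ ω, ((max (S ω) (T ω) : ℕ) : ℝ) / (S ω : ℝ) ∂μ
      ≤ ∫ ω, ((M ω : ℕ) : ℝ) / ((m ω : ℕ) : ℝ) ∂μ := by
    refine integral_mono hratioTS hratio fun ω => ?_
    simp only
    rw [← hM ω]
    have h1 : (0:ℝ) < m ω := by exact_mod_cast hm1 ω
    have h2 : (m ω : ℝ) ≤ (S ω : ℝ) := by exact_mod_cast hmS ω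
    gcongr
  rw [hj₀, div_le_iff₀ hSpos]
  calc ∫ ω, ((M ω : ℕ) : ℝ) ∂μ = ∫ ω, ((max (S ω) (T ω) : ℕ) : ℝ) ∂μ := by rw [← hMeq]
    _ ≤ (∫ ω, ((max (S ω) (T ω) : ℕ) : ℝ) / (S ω : ℝ) ∂μ) * ∫ ω, (S ω : ℝ) ∂μ := hcore
    _ ≤ (∫ ω, ((M ω : ℕ) : ℝ) / ((m ω : ℕ) : ℝ) ∂μ) * ∫ ω, (S ω : ℝ) ∂μ :=
        mul_le_mul_of_nonneg_right hstep2 hSpos.le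
end

section
/- For independent positive integer-valued random variables σ₁,...,σ_J with finite means, 1 + 2·E[σ_max/σ_min] ≥ 2 + E[σ_max]/min_j E[σ_j]. -/
open MeasureTheory ProbabilityTheory Finset

/-- Any finset-sup of measurable ℕ-valued functions is measurable. -/
lemma measurable_finset_sup_nat {α : Type*} [MeasurableSpace α] {ι : Type*}
    (s : Finset ι) (g : ι → α → ℕ) (hg : ∀ i, Measurable (g i)) :
    Measurable fun a => s.sup fun i => g i a := by
  classical
  induction s using Finset.induction_on with
  | empty => simpa using measurable_const
  | insert _ _ h ih =>
    simp only [Finset.sup_insert]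
    exact (measurable_of_countable fun q : ℕ × ℕ => q.1 ⊔ q.2).comp ((hg _).prodMk ih)

/-- One-dimensional Chebyshev correlation inequality for the pair
`x ↦ max x n` and `x ↦ max x n / x` on a probability measure on `ℕ`
supported on `{x | 1 ≤ x}`. -/
lemma cheb_max_div (ν : Measure ℕ) [IsProbabilityMeasure ν] (hpos : ∀ᵐ x ∂ν, 1 ≤ x)
    (hid : Integrable (fun x : ℕ => (x : ℝ)) ν) (n : ℕ) :
    ∫ x, ((max x n : ℕ) : ℝ) ∂ν ≤
      (∫ x, ((max x n : ℕ) : ℝ) / (x : ℝ) ∂ν) * ∫ x, (x : ℝ) ∂ν := by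
  set f : ℕ → ℝ := fun x => ((max x n : ℕ) : ℝ) / (x : ℝ) with hf
  -- antitonicity of f on positives
  have hanti : ∀ a b : ℕ, 1 ≤ a → a ≤ b → f b ≤ f a := by
    intro a b ha hab
    have ha0 : (0 : ℝ) < a := by exact_mod_cast ha
    have hb0 : (0 : ℝ) < b := by exact_mod_cast le_trans ha hab
    rw [hf]
    rw [div_le_div_iff₀ hb0 ha0]
    have key : (max b n) * a ≤ (max a n) * b := by
      rcases le_total n b with h | h
      · rw [max_eq_left h]
        calc b * a = a * b := Nat.mul_comm _ _
        _ ≤ max a n * b := Nat.mul_le_mul_right _ (le_max_left _ _)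
      · rw [max_eq_right h, max_eq_right (le_trans hab h)]
        exact Nat.mul_le_mul_left _ hab
    exact_mod_cast key
  have hf_bound : ∀ x : ℕ, 1 ≤ x → |f x| ≤ (n : ℝ) + 1 := by
    intro x hx
    have hx0 : (0 : ℝ) < x := by exact_mod_cast hx
    rw [abs_of_nonneg (by positivity)]
    rw [div_le_iff₀ hx0]
    have : (max x n : ℕ) ≤ (n + 1) * x := by
      rcases le_total x n with h | h
      · rw [max_eq_right h]
        calc n ≤ n * x := Nat.le_mul_of_pos_right _ hx
        _ ≤ (n + 1) * x := Nat.mul_le_mul_right _ (Nat.le_succ _)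
      · rw [max_eq_left h]
        calc x = 1 * x := (Nat.one_mul _).symm
        _ ≤ (n + 1) * x := Nat.mul_le_mul_right _ (Nat.succ_le_succ (Nat.zero_le _))
    calc ((max x n : ℕ) : ℝ) ≤ ((n + 1) * x : ℕ) := by exact_mod_cast this
    _ = ((n : ℝ) + 1) * x := by push_cast; ring
  have hfint : Integrable f ν := by
    refine (integrable_const ((n : ℝ) + 1)).mono'
      (measurable_of_countable f).aestronglyMeasurable ?_
    filter_upwards [hpos] with x hx
    exact hf_bound x hx
  have hfgint : Integrable (fun x => f x * (x : ℝ)) ν := by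
    refine (hid.const_mul ((n : ℝ) + 1)).mono'
      (measurable_of_countable _).aestronglyMeasurable ?_
    filter_upwards [hpos] with x hx
    have hx0 : (0 : ℝ) ≤ x := by positivity
    rw [Real.norm_eq_abs, abs_mul, abs_of_nonneg hx0]
    exact mul_le_mul_of_nonneg_right (hf_bound x hx) hx0
  -- a.e. positivity on the product
  have h0 : ν {0} = 0 := by
    rw [ae_iff] at hpos
    convert hpos using 2
    ext x
    simp [Nat.lt_one_iff]
  have hprod : ∀ᵐ p : ℕ × ℕ ∂ν.prod ν, 1 ≤ p.1 ∧ 1 ≤ p.2 := by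
    rw [ae_iff]
    have hsub : {p : ℕ × ℕ | ¬(1 ≤ p.1 ∧ 1 ≤ p.2)} ⊆
        (({0} : Set ℕ) ×ˢ Set.univ) ∪ (Set.univ ×ˢ ({0} : Set ℕ)) := by
      intro p hp
      simp only [Set.mem_setOf_eq, not_and_or, not_le, Nat.lt_one_iff] at hp
      rcases hp with h | h
      · exact Or.inl (Set.mem_prod.2 ⟨Set.mem_singleton_iff.2 h, Set.mem_univ _⟩)
      · exact Or.inr (Set.mem_prod.2 ⟨Set.mem_univ _, Set.mem_singleton_iff.2 h⟩)
    refine measure_mono_null hsub (measure_union_null ?_ ?_)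
    · rw [Measure.prod_prod]; simp [h0]
    · rw [Measure.prod_prod]; simp [h0]
  -- nonnegativity of the Chebyshev integrand
  have key : 0 ≤ ∫ p : ℕ × ℕ, (f p.1 - f p.2) * ((p.2 : ℝ) - (p.1 : ℝ)) ∂ν.prod ν := by
    refine integral_nonneg_of_ae ?_
    filter_upwards [hprod] with p hp
    obtain ⟨h1, h2⟩ := hp
    show (0 : ℝ) ≤ (f p.1 - f p.2) * ((p.2 : ℝ) - (p.1 : ℝ))
    rcases le_total p.1 p.2 with h | h
    · exact mul_nonneg (sub_nonneg.2 (hanti _ _ h1 h)) (sub_nonneg.2 (by exact_mod_cast h))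
    · have ha : f p.1 - f p.2 ≤ 0 := sub_nonpos.2 (hanti _ _ h2 h)
      have hb : (p.2 : ℝ) - (p.1 : ℝ) ≤ 0 := sub_nonpos.2 (by exact_mod_cast h)
      nlinarith [mul_nonneg (neg_nonneg.2 ha) (neg_nonneg.2 hb)]
  -- expansion of the product integral
  have h1 : Integrable (fun p : ℕ × ℕ => f p.1 * (p.2 : ℝ)) (ν.prod ν) := hfint.mul_prod hid
  have h2 : Integrable (fun p : ℕ × ℕ => (p.1 : ℝ) * f p.2) (ν.prod ν) := hid.mul_prod hfint
  have h3 : Integrable (fun p : ℕ × ℕ => (f p.1 * (p.1 : ℝ)) * (1 : ℝ)) (ν.prod ν) :=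
    hfgint.mul_prod (integrable_const 1)
  have h4 : Integrable (fun p : ℕ × ℕ => (1 : ℝ) * (f p.2 * (p.2 : ℝ))) (ν.prod ν) :=
    (integrable_const 1).mul_prod hfgint
  have hexp : ∫ p : ℕ × ℕ, (f p.1 - f p.2) * ((p.2 : ℝ) - (p.1 : ℝ)) ∂ν.prod ν
      = (∫ x, f x ∂ν) * (∫ x, (x : ℝ) ∂ν) + (∫ x, (x : ℝ) ∂ν) * (∫ x, f x ∂ν)
        - ((∫ x, f x * (x : ℝ) ∂ν) * 1 + 1 * ∫ x, f x * (x : ℝ) ∂ν) := by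
    have heq : (fun p : ℕ × ℕ => (f p.1 - f p.2) * ((p.2 : ℝ) - (p.1 : ℝ)))
        = fun p : ℕ × ℕ => (f p.1 * (p.2 : ℝ) + (p.1 : ℝ) * f p.2)
          - ((f p.1 * (p.1 : ℝ)) * (1 : ℝ) + (1 : ℝ) * (f p.2 * (p.2 : ℝ))) := by
      funext p; ring
    have h12 : Integrable (fun p : ℕ × ℕ => f p.1 * (p.2 : ℝ) + (p.1 : ℝ) * f p.2)
        (ν.prod ν) := h1.add h2
    have h34 : Integrable (fun p : ℕ × ℕ =>
        (f p.1 * (p.1 : ℝ)) * (1 : ℝ) + (1 : ℝ) * (f p.2 * (p.2 : ℝ))) (ν.prod ν) := h3.add h4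
    have e1 : ∫ p : ℕ × ℕ, f p.1 * (p.2 : ℝ) ∂ν.prod ν
        = (∫ x, f x ∂ν) * ∫ x : ℕ, (x : ℝ) ∂ν := integral_prod_mul f (fun x : ℕ => (x : ℝ))
    have e2 : ∫ p : ℕ × ℕ, (p.1 : ℝ) * f p.2 ∂ν.prod ν
        = (∫ x : ℕ, (x : ℝ) ∂ν) * ∫ x, f x ∂ν := integral_prod_mul (fun x : ℕ => (x : ℝ)) f
    have e3 : ∫ p : ℕ × ℕ, (f p.1 * (p.1 : ℝ)) * (1 : ℝ) ∂ν.prod ν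
        = (∫ x, f x * (x : ℝ) ∂ν) * ∫ _ : ℕ, (1 : ℝ) ∂ν :=
      integral_prod_mul (fun x : ℕ => f x * (x : ℝ)) (fun _ : ℕ => (1 : ℝ))
    have e4 : ∫ p : ℕ × ℕ, (1 : ℝ) * (f p.2 * (p.2 : ℝ)) ∂ν.prod ν
        = (∫ _ : ℕ, (1 : ℝ) ∂ν) * ∫ x, f x * (x : ℝ) ∂ν :=
      integral_prod_mul (fun _ : ℕ => (1 : ℝ)) (fun x : ℕ => f x * (x : ℝ))
    rw [heq, integral_sub h12 h34, integral_add h1 h2, integral_add h3 h4, e1, e2, e3, e4]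
    simp
  have hle : ∫ x, f x * (x : ℝ) ∂ν ≤ (∫ x, f x ∂ν) * ∫ x, (x : ℝ) ∂ν := by
    rw [hexp] at key; linarith
  have hcongr : ∫ x, ((max x n : ℕ) : ℝ) ∂ν = ∫ x, f x * (x : ℝ) ∂ν := by
    refine integral_congr_ae ?_
    filter_upwards [hpos] with x hx
    have hx0 : (x : ℝ) ≠ 0 := by positivity
    rw [hf]
    field_simp
  rw [hcongr]
  exact hle

/-- For independent positive integer-valued random variables σ₁,...,σ_J with finite means,
1 + 2·E[σ_max/σ_min] ≥ 2 + E[σ_max]/min_j E[σ_j]. -/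
theorem stmt_1 {Ω : Type*} [MeasurableSpace Ω] (μ : Measure Ω) [IsProbabilityMeasure μ]
    (J : ℕ) [NeZero J] (σ : Fin J → Ω → ℕ)
    (hpos : ∀ j ω, 1 ≤ σ j ω)
    (hmeas : ∀ j, Measurable (σ j))
    (hindep : iIndepFun σ μ)
    (hint : ∀ j, Integrable (fun ω => (σ j ω : ℝ)) μ)
    (hratio : Integrable (fun ω =>
      ((Finset.univ.sup' Finset.univ_nonempty fun j => σ j ω : ℕ) : ℝ) /
      ((Finset.univ.inf' Finset.univ_nonempty fun j => σ j ω : ℕ) : ℝ)) μ) :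
    2 + (∫ ω, ((Finset.univ.sup' Finset.univ_nonempty fun j => σ j ω : ℕ) : ℝ) ∂μ) /
      (Finset.univ.inf' Finset.univ_nonempty fun j => ∫ ω, (σ j ω : ℝ) ∂μ) ≤
    1 + 2 * ∫ ω, ((Finset.univ.sup' Finset.univ_nonempty fun j => σ j ω : ℕ) : ℝ) /
      ((Finset.univ.inf' Finset.univ_nonempty fun j => σ j ω : ℕ) : ℝ) ∂μ := by
  classical
  obtain ⟨j0, -, hj0⟩ := Finset.exists_mem_eq_inf' (Finset.univ_nonempty)
    (fun j : Fin J => ∫ ω, (σ j ω : ℝ) ∂μ)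
  set X : Ω → ℕ := σ j0 with hX
  set N : Ω → ℕ := fun ω => (Finset.univ.erase j0).sup fun k => σ k ω with hN
  set Smax : Ω → ℕ := fun ω => Finset.univ.sup' Finset.univ_nonempty fun k => σ k ω with hSmax
  set Smin : Ω → ℕ := fun ω => Finset.univ.inf' Finset.univ_nonempty fun k => σ k ω with hSmin
  have hSmax_eq : ∀ ω, Smax ω = max (X ω) (N ω) := by
    intro ω
    simp only [hSmax]
    rw [Finset.sup'_eq_sup]
    conv_lhs => rw [← Finset.insert_erase (Finset.mem_univ j0)]
    rw [Finset.sup_insert]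
  have hSmin_le : ∀ ω, Smin ω ≤ X ω := fun ω => Finset.inf'_le _ (Finset.mem_univ j0)
  have hSmin_pos : ∀ ω, 1 ≤ Smin ω := fun ω => Finset.le_inf' _ _ fun k _ => hpos k ω
  have hSmin_le_Smax : ∀ ω, Smin ω ≤ Smax ω := fun ω =>
    le_trans (Finset.inf'_le _ (Finset.mem_univ j0))
      (Finset.le_sup' (fun k => σ k ω) (Finset.mem_univ j0))
  -- measurability
  have hXm : Measurable X := hmeas j0
  have hNm : Measurable N := measurable_finset_sup_nat _ σ hmeas
  have hSmaxm : Measurable Smax := by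
    have : Smax = fun ω => max (X ω) (N ω) := funext hSmax_eq
    rw [this]
    exact (measurable_of_countable fun q : ℕ × ℕ => max q.1 q.2).comp (hXm.prodMk hNm)
  -- independence of X and N
  have hXN : IndepFun X N μ := by
    have h := (hindep.indepFun_finset {j0} (Finset.univ.erase j0)
        (by simp) hmeas).comp
      (φ := fun v : ({j0} : Finset (Fin J)) → ℕ => v ⟨j0, Finset.mem_singleton_self j0⟩)
      (ψ := fun v : ((Finset.univ.erase j0 : Finset (Fin J)) : Finset (Fin J)) → ℕ =>
        Finset.univ.sup fun i => v i)
      (measurable_pi_apply _ : Measurable (fun v : ({j0} : Finset (Fin J)) → ℕ => v ⟨j0, Finset.mem_singleton_self j0⟩))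
      (measurable_finset_sup_nat Finset.univ (fun i (v : ((Finset.univ.erase j0 : Finset (Fin J)) : Finset (Fin J)) → ℕ) => v i) fun i => measurable_pi_apply i)
    have e2 : (fun v : ((Finset.univ.erase j0 : Finset (Fin J)) : Finset (Fin J)) → ℕ =>
          Finset.univ.sup fun i => v i) ∘
        (fun a (i : ((Finset.univ.erase j0 : Finset (Fin J)) : Finset (Fin J))) => σ i a)
        = N := by
      funext a
      show Finset.univ.sup (fun i : ((Finset.univ.erase j0 : Finset (Fin J)) : Finset (Fin J)) =>
        σ i a) = N a
      rw [Finset.univ_eq_attach]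
      exact Finset.sup_attach (Finset.univ.erase j0) (fun k => σ k a)
    exact e2 ▸ h
  -- push to the product measure
  set ν : Measure ℕ := μ.map X with hν
  set ρ : Measure ℕ := μ.map N with hρ
  haveI : IsProbabilityMeasure ν := Measure.isProbabilityMeasure_map hXm.aemeasurable
  haveI : IsProbabilityMeasure ρ := Measure.isProbabilityMeasure_map hNm.aemeasurable
  have hPm : Measurable fun ω => (N ω, X ω) := hNm.prodMk hXm
  have hmap : μ.map (fun ω => (N ω, X ω)) = ρ.prod ν :=
    (indepFun_iff_map_prod_eq_prod_map_map hNm.aemeasurable hXm.aemeasurable).mp hXN.symm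
  have hν1 : ∀ᵐ x ∂ν, 1 ≤ x := by
    rw [hν, ae_map_iff hXm.aemeasurable (MeasurableSet.of_discrete (s := {x : ℕ | 1 ≤ x}))]
    exact Filter.Eventually.of_forall fun ω => hpos j0 ω
  have hid : Integrable (fun x : ℕ => (x : ℝ)) ν := by
    rw [hν, integrable_map_measure (measurable_of_countable _).aestronglyMeasurable
      hXm.aemeasurable]
    exact hint j0
  -- integrability on Ω
  have hSmax_int : Integrable (fun ω => (Smax ω : ℝ)) μ := by
    refine (integrable_finset_sum Finset.univ fun k _ => hint k).mono'
      ((measurable_of_countable _).comp hSmaxm).aestronglyMeasurable ?_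
    refine Filter.Eventually.of_forall fun ω => ?_
    rw [Real.norm_eq_abs, abs_of_nonneg (by positivity)]
    have : Smax ω ≤ ∑ k, σ k ω := by
      refine Finset.sup'_le _ _ fun k _ => ?_
      exact Finset.single_le_sum (f := fun k => σ k ω) (fun _ _ => Nat.zero_le _)
        (Finset.mem_univ k)
    calc (Smax ω : ℝ) ≤ ((∑ k, σ k ω : ℕ) : ℝ) := by exact_mod_cast this
    _ = ∑ k, ((σ k ω : ℕ) : ℝ) := by push_cast; rfl
  have hG_int : Integrable (fun ω => (Smax ω : ℝ) / (X ω : ℝ)) μ := by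
    refine hratio.mono'
      ((measurable_of_countable fun q : ℕ × ℕ => (q.1 : ℝ) / (q.2 : ℝ)).comp
        (hSmaxm.prodMk hXm)).aestronglyMeasurable ?_
    refine Filter.Eventually.of_forall fun ω => ?_
    rw [Real.norm_eq_abs, abs_of_nonneg (by positivity)]
    have hmin0 : (0 : ℝ) < (Smin ω : ℝ) := by exact_mod_cast hSmin_pos ω
    exact div_le_div_of_nonneg_left (by positivity) hmin0 (by exact_mod_cast hSmin_le ω)
  -- transfer of the three integrals
  set F : ℕ × ℕ → ℝ := fun p => ((max p.2 p.1 : ℕ) : ℝ) with hF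
  set G : ℕ × ℕ → ℝ := fun p => ((max p.2 p.1 : ℕ) : ℝ) / (p.2 : ℝ) with hG
  have hFP : (fun ω => F (N ω, X ω)) = fun ω => (Smax ω : ℝ) := by
    funext ω; rw [hF]; simp only; rw [hSmax_eq ω]
  have hGP : (fun ω => G (N ω, X ω)) = fun ω => (Smax ω : ℝ) / (X ω : ℝ) := by
    funext ω; rw [hG]; simp only; rw [hSmax_eq ω]
  have hFint : Integrable F (ρ.prod ν) := by
    rw [← hmap, integrable_map_measure (measurable_of_countable F).aestronglyMeasurable
      hPm.aemeasurable]
    show Integrable (fun ω => F (N ω, X ω)) μ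
    rw [hFP]; exact hSmax_int
  have hGint : Integrable G (ρ.prod ν) := by
    rw [← hmap, integrable_map_measure (measurable_of_countable G).aestronglyMeasurable
      hPm.aemeasurable]
    show Integrable (fun ω => G (N ω, X ω)) μ
    rw [hGP]; exact hG_int
  have hIF : ∫ ω, (Smax ω : ℝ) ∂μ = ∫ n, ∫ x, F (n, x) ∂ν ∂ρ := by
    rw [← hFP, ← integral_map hPm.aemeasurable (measurable_of_countable F).aestronglyMeasurable,
      hmap, integral_prod _ hFint]
  have hIG : ∫ ω, (Smax ω : ℝ) / (X ω : ℝ) ∂μ = ∫ n, ∫ x, G (n, x) ∂ν ∂ρ := by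
    rw [← hGP, ← integral_map hPm.aemeasurable (measurable_of_countable G).aestronglyMeasurable,
      hmap, integral_prod _ hGint]
  have hIX : ∫ ω, (X ω : ℝ) ∂μ = ∫ x, (x : ℝ) ∂ν := by
    rw [hν, integral_map hXm.aemeasurable (measurable_of_countable _).aestronglyMeasurable]
  -- the key estimate via Chebyshev
  have hinner : ∀ n : ℕ, (∫ x, F (n, x) ∂ν) ≤ (∫ x, G (n, x) ∂ν) * ∫ x, (x : ℝ) ∂ν :=
    fun n => cheb_max_div ν hν1 hid n
  have hkey : ∫ ω, (Smax ω : ℝ) ∂μ ≤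
      (∫ ω, (Smax ω : ℝ) / (X ω : ℝ) ∂μ) * ∫ ω, (X ω : ℝ) ∂μ := by
    rw [hIF, hIG, hIX, ← integral_mul_const]
    exact integral_mono hFint.integral_prod_left
      (hGint.integral_prod_left.mul_const _) hinner
  -- comparison of ratios
  have hEG_le : ∫ ω, (Smax ω : ℝ) / (X ω : ℝ) ∂μ ≤
      ∫ ω, (Smax ω : ℝ) / (Smin ω : ℝ) ∂μ := by
    refine integral_mono hG_int hratio fun ω => ?_
    have hmin0 : (0 : ℝ) < (Smin ω : ℝ) := by exact_mod_cast hSmin_pos ω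
    exact div_le_div_of_nonneg_left (by positivity) hmin0 (by exact_mod_cast hSmin_le ω : (Smin ω : ℝ) ≤ X ω)
  have hER1 : (1 : ℝ) ≤ ∫ ω, (Smax ω : ℝ) / (Smin ω : ℝ) ∂μ := by
    have := integral_mono (integrable_const (1 : ℝ)) hratio (fun ω => by
      have hmin0 : (0 : ℝ) < (Smin ω : ℝ) := by exact_mod_cast hSmin_pos ω
      rw [le_div_iff₀ hmin0, one_mul]
      exact_mod_cast hSmin_le_Smax ω)
    calc (1 : ℝ) = ∫ _, (1 : ℝ) ∂μ := by simp
    _ ≤ _ := this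
  have hB1 : (1 : ℝ) ≤ ∫ ω, (X ω : ℝ) ∂μ := by
    have := integral_mono (integrable_const (1 : ℝ)) (hint j0) (fun ω => by
      show (1 : ℝ) ≤ (σ j0 ω : ℝ); exact_mod_cast hpos j0 ω)
    calc (1 : ℝ) = ∫ _, (1 : ℝ) ∂μ := by simp
    _ ≤ _ := this
  have hB0 : (0 : ℝ) < ∫ ω, (X ω : ℝ) ∂μ := lt_of_lt_of_le one_pos hB1
  -- final arithmetic
  rw [hj0]
  set A : ℝ := ∫ ω, (Smax ω : ℝ) ∂μ
  set B : ℝ := ∫ ω, (X ω : ℝ) ∂μ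
  set ER : ℝ := ∫ ω, (Smax ω : ℝ) / (Smin ω : ℝ) ∂μ
  have hAB : A / B ≤ ER := by
    rw [div_le_iff₀ hB0]
    calc A ≤ (∫ ω, (Smax ω : ℝ) / (X ω : ℝ) ∂μ) * B := hkey
    _ ≤ ER * B := mul_le_mul_of_nonneg_right hEG_le (le_of_lt hB0)
  linarith
end
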